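/- Let β ∈ (0,1) be irrational and let n ≥ 1 be such that p_{n−1}/q_{n−1} < β < p_n/q_n, where p_k/q_k are the convergents of β. Let z_n be the point on the geodesic semicircle in the upper half-plane with endpoints p_{n−1}/q_{n−1} and p_n/q_n whose real part equals β, so that Im z_n = sqrt( (β − p_{n−1}/q_{n−1}) · (p_n/q_n − β) ). Then 1/(2 q_n q_{n+1}) < Im z_n < 1/(2 q_{n−1} q_n). -/

import Mathlib

noncomputable section

/-- The Gauss map `x ↦ 1/x - ⌊1/x⌋`. -/
def gaussMap (x : ℝ) : ℝ := 1/x - ⌊(1/x : ℝ)⌋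

/-- The continued fraction digit `k_n(α)` for `n ≥ 1`. -/
def cfK (α : ℝ) (n : ℕ) : ℤ := ⌊(1 / (gaussMap^[n-1] α) : ℝ)⌋

/-- `cfP α n = p_{n-1}(α)`: numerators of convergents, `p_{-1} = 1, p_0 = 0`. -/
def cfP (α : ℝ) : ℕ → ℤ
  | 0 => 1
  | 1 => 0
  | n+2 => cfK α (n+1) * cfP α (n+1) + cfP α n

/-- `cfQ α n = q_{n-1}(α)`: denominators of convergents, `q_{-1} = 0, q_0 = 1`. -/
def cfQ (α : ℝ) : ℕ → ℤ
  | 0 => 0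
  | 1 => 1
  | n+2 => cfK α (n+1) * cfQ α (n+1) + cfQ α n

lemma iter_mem (β : ℝ) (hβ : β ∈ Set.Ioo (0:ℝ) 1) (hirr : Irrational β) (m : ℕ) :
    gaussMap^[m] β ∈ Set.Ioo (0:ℝ) 1 ∧ Irrational (gaussMap^[m] β) := by
  induction m with
  | zero => simpa using ⟨hβ, hirr⟩
  | succ m ih =>
    rw [Function.iterate_succ_apply']
    obtain ⟨⟨hx0, hx1⟩, hxi⟩ := ih
    set x := gaussMap^[m] β
    have hinv : Irrational (1/x) := by simpa [one_div] using hxi.inv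
    have hgi : Irrational (gaussMap x) := by
      unfold gaussMap; exact hinv.sub_intCast _
    have hfr : gaussMap x = Int.fract (1/x) := rfl
    have h0 : 0 ≤ gaussMap x := by rw [hfr]; exact Int.fract_nonneg _
    have h1 : gaussMap x < 1 := by rw [hfr]; exact Int.fract_lt_one _
    have hne : gaussMap x ≠ 0 := hgi.ne_zero
    exact ⟨⟨lt_of_le_of_ne h0 (Ne.symm hne), h1⟩, hgi⟩

lemma cfK_one_le (β : ℝ) (hβ : β ∈ Set.Ioo (0:ℝ) 1) (hirr : Irrational β) (m : ℕ) :
    1 ≤ cfK β (m+1) := by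
  obtain ⟨⟨h0, h1⟩, -⟩ := iter_mem β hβ hirr m
  have : (1:ℝ) ≤ 1 / gaussMap^[m] β := one_le_one_div h0 (le_of_lt h1)
  exact Int.le_floor.mpr (by exact_mod_cast this)

lemma cfQ_nonneg_mono (β : ℝ) (hβ : β ∈ Set.Ioo (0:ℝ) 1) (hirr : Irrational β) (m : ℕ) :
    0 ≤ cfQ β m ∧ cfQ β m ≤ cfQ β (m+1) := by
  induction m with
  | zero => simp [cfQ]
  | succ m ih =>
    obtain ⟨h0, h1⟩ := ih
    have h0' : 0 ≤ cfQ β (m+1) := le_trans h0 h1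
    have hK := cfK_one_le β hβ hirr m
    constructor
    · exact h0'
    · show cfQ β (m+1) ≤ cfK β (m+1) * cfQ β (m+1) + cfQ β m
      nlinarith

lemma cfQ_one_le (β : ℝ) (hβ : β ∈ Set.Ioo (0:ℝ) 1) (hirr : Irrational β) (m : ℕ) :
    1 ≤ cfQ β (m+1) := by
  induction m with
  | zero => simp [cfQ]
  | succ m ih => exact le_trans ih (cfQ_nonneg_mono β hβ hirr (m+1)).2

/-- key identity -/
lemma cf_ident (β : ℝ) (hβ : β ∈ Set.Ioo (0:ℝ) 1) (hirr : Irrational β) (m : ℕ) :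
    β * ((cfQ β (m+1) : ℝ) + (cfQ β m : ℝ) * gaussMap^[m] β)
      = (cfP β (m+1) : ℝ) + (cfP β m : ℝ) * gaussMap^[m] β := by
  induction m with
  | zero => simp [cfP, cfQ]
  | succ m ih =>
    obtain ⟨⟨ht0, ht1⟩, -⟩ := iter_mem β hβ hirr m
    set t := gaussMap^[m] β with htdef
    have htne : t ≠ 0 := ne_of_gt ht0
    have hK : (cfK β (m+1) : ℝ) = (⌊1/t⌋ : ℤ) := by simp [cfK, htdef]
    have hstep : gaussMap^[m+1] β = 1/t - (cfK β (m+1) : ℝ) := by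
      rw [Function.iterate_succ_apply', hK]; rfl
    have hQ : (cfQ β (m+2) : ℝ) = (cfK β (m+1) : ℝ) * (cfQ β (m+1) : ℝ) + (cfQ β m : ℝ) := by
      push_cast [cfQ]; ring
    have hP : (cfP β (m+2) : ℝ) = (cfK β (m+1) : ℝ) * (cfP β (m+1) : ℝ) + (cfP β m : ℝ) := by
      push_cast [cfP]; ring
    rw [hstep, hQ, hP]
    apply mul_right_cancel₀ htne
    field_simp
    linear_combination ih

lemma cf_det (β : ℝ) (m : ℕ) :
    cfP β (m+1) * cfQ β m - cfP β m * cfQ β (m+1) = (-1)^(m+1) := by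
  induction m with
  | zero => rfl
  | succ m ih =>
    have hQ : cfQ β (m+2) = cfK β (m+1) * cfQ β (m+1) + cfQ β m := rfl
    have hP : cfP β (m+2) = cfK β (m+1) * cfP β (m+1) + cfP β m := rfl
    rw [hQ, hP, pow_succ]
    linear_combination (-1 : ℤ) * ih

lemma cf_E (β : ℝ) (hβ : β ∈ Set.Ioo (0:ℝ) 1) (hirr : Irrational β) (m : ℕ) :
    (β * (cfQ β m : ℝ) - (cfP β m : ℝ)) *
        ((cfQ β (m+1) : ℝ) + (cfQ β m : ℝ) * gaussMap^[m] β) = (-1)^(m+1) := by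
  have hI := cf_ident β hβ hirr m
  have hD : ((cfP β (m+1) : ℝ)) * (cfQ β m : ℝ) - (cfP β m : ℝ) * (cfQ β (m+1) : ℝ)
      = (-1)^(m+1) := by exact_mod_cast cf_det β m
  linear_combination (cfQ β m : ℝ) * hI + hD

set_option maxHeartbeats 1000000

/-- If `p_{n−1}/q_{n−1} < β < p_n/q_n`, the point `z_n` on the geodesic with endpoints
`p_{n−1}/q_{n−1}` and `p_n/q_n` lying above `β` has
`1/(2 q_n q_{n+1}) < Im z_n < 1/(2 q_{n−1} q_n)`. -/
theorem geodesic_height_bounds (β : ℝ) (hβ : β ∈ Set.Ioo (0:ℝ) 1) (hirr : Irrational β)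
    (n : ℕ) (hn : 1 ≤ n)
    (hlt : ((cfP β n : ℝ) / (cfQ β n : ℝ)) < β ∧ β < ((cfP β (n+1) : ℝ) / (cfQ β (n+1) : ℝ))) :
    1 / (2 * (cfQ β (n+1) : ℝ) * (cfQ β (n+2) : ℝ))
        < Real.sqrt ((β - (cfP β n : ℝ) / (cfQ β n : ℝ)) *
            ((cfP β (n+1) : ℝ) / (cfQ β (n+1) : ℝ) - β)) ∧
      Real.sqrt ((β - (cfP β n : ℝ) / (cfQ β n : ℝ)) *
            ((cfP β (n+1) : ℝ) / (cfQ β (n+1) : ℝ) - β))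
        < 1 / (2 * (cfQ β n : ℝ) * (cfQ β (n+1) : ℝ)) := by
  obtain ⟨hlt1, hlt2⟩ := hlt
  -- integer facts
  have hq1i : 1 ≤ cfQ β n := by
    obtain ⟨k, rfl⟩ := Nat.exists_eq_add_of_le hn
    rw [add_comm]; exact cfQ_one_le β hβ hirr k
  have hq2i : 1 ≤ cfQ β (n+1) := cfQ_one_le β hβ hirr n
  have hq3i : 1 ≤ cfQ β (n+2) := cfQ_one_le β hβ hirr (n+1)
  have hm1i : cfQ β n ≤ cfQ β (n+1) := (cfQ_nonneg_mono β hβ hirr n).2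
  have hm2i : cfQ β (n+1) ≤ cfQ β (n+2) := (cfQ_nonneg_mono β hβ hirr (n+1)).2
  have hsumi : cfQ β n + cfQ β (n+1) ≤ cfQ β (n+2) := by
    have hK := cfK_one_le β hβ hirr n
    have hrec : cfQ β (n+2) = cfK β (n+1) * cfQ β (n+1) + cfQ β n := rfl
    have h1 : cfQ β (n+1) ≤ cfK β (n+1) * cfQ β (n+1) :=
      le_mul_of_one_le_left (by linarith) hK
    linarith [hrec.ge, hrec.le]
  have h1q1 : (1:ℝ) ≤ (cfQ β n : ℝ) := by exact_mod_cast hq1i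
  have h1q2 : (1:ℝ) ≤ (cfQ β (n+1) : ℝ) := by exact_mod_cast hq2i
  have h1q3 : (1:ℝ) ≤ (cfQ β (n+2) : ℝ) := by exact_mod_cast hq3i
  have hq12 : ((cfQ β n : ℝ)) ≤ (cfQ β (n+1) : ℝ) := by exact_mod_cast hm1i
  have hq23 : ((cfQ β (n+1) : ℝ)) ≤ (cfQ β (n+2) : ℝ) := by exact_mod_cast hm2i
  have hsum : ((cfQ β n : ℝ)) + (cfQ β (n+1) : ℝ) ≤ (cfQ β (n+2) : ℝ) := by
    exact_mod_cast hsumi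
  set q1 : ℝ := (cfQ β n : ℝ) with hq1d
  set q2 : ℝ := (cfQ β (n+1) : ℝ) with hq2d
  set q3 : ℝ := (cfQ β (n+2) : ℝ) with hq3d
  obtain ⟨⟨hu0, hu1⟩, -⟩ := iter_mem β hβ hirr n
  obtain ⟨⟨hv0, hv1⟩, -⟩ := iter_mem β hβ hirr (n+1)
  set u : ℝ := gaussMap^[n] β with hud
  set v : ℝ := gaussMap^[n+1] β with hvd
  set A : ℝ := q2 + q1 * u with hAd
  set B : ℝ := q3 + q2 * v with hBd
  set a : ℝ := β - (cfP β n : ℝ) / q1 with had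
  set b : ℝ := (cfP β (n+1) : ℝ) / q2 - β with hbd
  have En := cf_E β hβ hirr n
  rw [← hq1d, ← hq2d, ← hud, ← hAd] at En
  have En2 := cf_E β hβ hirr (n+1)
  rw [← hq2d, ← hq3d, ← hvd, ← hBd] at En2
  clear_value q1 q2 q3 u v A B a b
  have hq1pos : (0:ℝ) < q1 := lt_of_lt_of_le zero_lt_one h1q1
  have hq2pos : (0:ℝ) < q2 := lt_of_lt_of_le zero_lt_one h1q2
  have hq3pos : (0:ℝ) < q3 := lt_of_lt_of_le zero_lt_one h1q3
  have hq1ne : q1 ≠ 0 := ne_of_gt hq1pos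
  have hq2ne : q2 ≠ 0 := ne_of_gt hq2pos
  have hq1u : 0 < q1 * u := mul_pos hq1pos hu0
  have hq2v : 0 < q2 * v := mul_pos hq2pos hv0
  have hq1u1 : q1 * u < q1 * 1 := mul_lt_mul_of_pos_left hu1 hq1pos
  have hq2v1 : q2 * v < q2 * 1 := mul_lt_mul_of_pos_left hv1 hq2pos
  have hApos : 0 < A := by rw [hAd]; linarith
  have hBpos : 0 < B := by rw [hBd]; linarith
  have hAlt : A < q3 := by rw [hAd]; linarith
  have hBlt : B < q3 + q2 := by rw [hBd]; linarith
  have apos : 0 < a := by rw [had]; exact sub_pos.mpr hlt1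
  have bpos : 0 < b := by rw [hbd]; exact sub_pos.mpr hlt2
  -- sign determination
  have epos : 0 < β * q1 - (cfP β n : ℝ) := by
    have := (div_lt_iff₀ hq1pos).mp hlt1
    linarith
  have hpow : ((-1:ℝ))^(n+1) = 1 := by
    rcases Nat.even_or_odd (n+1) with h | h
    · exact h.neg_one_pow
    · exfalso
      rw [h.neg_one_pow] at En
      have hpos := mul_pos epos hApos
      rw [En] at hpos
      linarith
  rw [hpow] at En
  have hpow2 : ((-1:ℝ))^(n+2) = -1 := by
    rw [pow_succ, hpow]; ring
  rw [hpow2] at En2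
  -- explicit formulas
  have key1 : a * q1 = β * q1 - (cfP β n : ℝ) := by
    rw [had]; field_simp
  have key2 : b * q2 = (cfP β (n+1) : ℝ) - β * q2 := by
    rw [hbd]; field_simp
  have ha : a * (q1 * A) = 1 := by
    calc a * (q1 * A) = (a * q1) * A := by ring
      _ = (β * q1 - (cfP β n : ℝ)) * A := by rw [key1]
      _ = 1 := En
  have hb : b * (q2 * B) = 1 := by
    calc b * (q2 * B) = (b * q2) * B := by ring
      _ = ((cfP β (n+1) : ℝ) - β * q2) * B := by rw [key2]
      _ = 1 := by linear_combination -En2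
  have hD : (cfP β (n+1) : ℝ) * q1 - (cfP β n : ℝ) * q2 = 1 := by
    have h := cf_det β n
    have h' : ((cfP β (n+1) : ℝ)) * q1 - (cfP β n : ℝ) * q2 = (-1:ℝ)^(n+1) := by
      rw [hq1d, hq2d]; exact_mod_cast h
    rw [hpow] at h'; exact h'
  have habm : (a + b) * (q1 * q2) = 1 := by
    rw [had, hbd]
    field_simp
    linear_combination hD
  have habpos : 0 < a * b := mul_pos apos bpos
  have h2q12 : (0:ℝ) < 2*q1*q2 := mul_pos (mul_pos two_pos hq1pos) hq2pos
  have h2q23 : (0:ℝ) < 2*q2*q3 := mul_pos (mul_pos two_pos hq2pos) hq3pos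
  -- a ≠ b by irrationality
  have hne : a ≠ b := by
    intro hEq
    have hEq3 : β * (2*q1*q2) = (cfP β n : ℝ)*q2 + (cfP β (n+1) : ℝ)*q1 := by
      linear_combination (-q2) * key1 + q1 * key2 + (q1*q2) * hEq
    have hcastD : ((2 * cfQ β n * cfQ β (n+1) : ℤ) : ℝ) = 2*q1*q2 := by
      rw [hq1d, hq2d]; push_cast; ring
    have hcastN : ((cfP β n * cfQ β (n+1) + cfP β (n+1) * cfQ β n : ℤ) : ℝ)
        = (cfP β n : ℝ)*q2 + (cfP β (n+1) : ℝ)*q1 := by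
      rw [hq1d, hq2d]; push_cast; ring
    have hβeq : β = ((cfP β n * cfQ β (n+1) + cfP β (n+1) * cfQ β n : ℤ) : ℝ)
        / ((2 * cfQ β n * cfQ β (n+1) : ℤ) : ℝ) := by
      rw [hcastD, hcastN, eq_div_iff (ne_of_gt h2q12)]
      linarith [hEq3]
    have : Irrational ((((cfP β n * cfQ β (n+1) + cfP β (n+1) * cfQ β n : ℤ) : ℚ)
        / ((2 * cfQ β n * cfQ β (n+1) : ℤ) : ℚ) : ℚ) : ℝ) := by
      have hcast : ((((cfP β n * cfQ β (n+1) + cfP β (n+1) * cfQ β n : ℤ) : ℚ)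
          / ((2 * cfQ β n * cfQ β (n+1) : ℤ) : ℚ) : ℚ) : ℝ)
          = ((cfP β n * cfQ β (n+1) + cfP β (n+1) * cfQ β n : ℤ) : ℝ)
          / ((2 * cfQ β n * cfQ β (n+1) : ℤ) : ℝ) := by push_cast; ring
      rw [hcast, ← hβeq]; exact hirr
    exact Rat.not_irrational _ this
  constructor
  · -- lower bound
    rw [Real.lt_sqrt (le_of_lt (one_div_pos.mpr h2q23)), div_pow, one_pow, div_lt_iff₀ (pow_pos h2q23 2)]
    have hmul : (a*b) * ((q1*A)*(q2*B)) = 1 := by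
      linear_combination (b*(q2*B)) * ha + hb
    have hq1A : 0 < q1*A := mul_pos hq1pos hApos
    have hq2B : 0 < q2*B := mul_pos hq2pos hBpos
    have h1 : q1*A < q2*q3 :=
      calc q1*A ≤ q2*A := mul_le_mul_of_nonneg_right hq12 hApos.le
        _ < q2*q3 := mul_lt_mul_of_pos_left hAlt hq2pos
    have h2 : q2*B < 2*(q2*q3) :=
      calc q2*B < q2*(q3+q2) := mul_lt_mul_of_pos_left hBlt hq2pos
        _ ≤ q2*(2*q3) := mul_le_mul_of_nonneg_left (by linarith) hq2pos.le
        _ = 2*(q2*q3) := by ring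
    have hXY : (q1*A)*(q2*B) < (2*q2*q3)^2 :=
      calc (q1*A)*(q2*B) < (q2*q3)*(2*(q2*q3)) :=
            mul_lt_mul'' h1 h2 hq1A.le hq2B.le
        _ = 2*(q2*q3)^2 := by ring
        _ ≤ 4*(q2*q3)^2 := by linarith [sq_nonneg (q2*q3)]
        _ = (2*q2*q3)^2 := by ring
    calc (1:ℝ) = (a*b) * ((q1*A)*(q2*B)) := hmul.symm
      _ < (a*b) * ((2*q2*q3)^2) := mul_lt_mul_of_pos_left hXY habpos
      _ = a*b*(2*q2*q3)^2 := by ring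
  · -- upper bound
    rw [Real.sqrt_lt' (one_div_pos.mpr h2q12), div_pow, one_pow,
      lt_div_iff₀ (pow_pos h2q12 2)]
    have hdne : (a - b) * (q1*q2) ≠ 0 :=
      mul_ne_zero (sub_ne_zero.mpr hne) (mul_ne_zero hq1ne hq2ne)
    have hd2 : 0 < ((a-b)*(q1*q2))^2 := by
      rcases hdne.lt_or_gt with h | h
      · rw [pow_two]; exact mul_pos_of_neg_of_neg h h
      · rw [pow_two]; exact mul_pos h h
    have hid : a*b*(2*q1*q2)^2 = ((a+b)*(q1*q2))^2 - ((a-b)*(q1*q2))^2 := by ring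
    rw [hid, habm]
    have h1 : ((1:ℝ))^2 = 1 := one_pow 2
    linarith [hd2]

end
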